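/- Every brick is matching covered: if G is a brick, then every edge of G lies in some perfect matching of G. -/

import Mathlib

/-- A graph is 3-connected if it has more than 3 vertices and deleting any set of fewer
than 3 vertices leaves a connected graph. -/
def ThreeConnected {V : Type*} [Fintype V] (G : SimpleGraph V) : Prop :=
  3 < Fintype.card V ∧ ∀ S : Set V, S.ncard < 3 → (G.induce Sᶜ).Connected

/-- A brick: a 3-connected graph such that deleting any two distinct vertices leaves
a graph with a perfect matching. -/
def IsBrick {V : Type*} [Fintype V] (G : SimpleGraph V) : Prop :=
  ThreeConnected G ∧ ∀ u v : V, u ≠ v →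
    ∃ M : (G.induce ({u, v} : Set V)ᶜ).Subgraph, M.IsPerfectMatching

/-- A connected graph with at least one edge is matching covered if every edge
lies in some perfect matching. -/
def MatchingCovered {V : Type*} (G : SimpleGraph V) : Prop :=
  G.Connected ∧ G.edgeSet.Nonempty ∧
    ∀ e ∈ G.edgeSet, ∃ M : G.Subgraph, M.IsPerfectMatching ∧ e ∈ M.edgeSet

/-- Every brick is matching covered. -/
theorem brick_matchingCovered {V : Type*} [Fintype V] (G : SimpleGraph V)
    (hG : IsBrick G) : MatchingCovered G := by
  obtain ⟨⟨hcard, hconn⟩, hpm⟩ := hG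
  have hGconn : G.Connected := by
    have h := hconn ∅ (by simp)
    rw [Set.compl_empty] at h
    exact (SimpleGraph.induceUnivIso G).connected_iff.mp h
  refine ⟨hGconn, ?_, ?_⟩
  · -- edge nonempty
    have h2 : 1 < Fintype.card V := by omega
    obtain ⟨u, v, huv⟩ := Fintype.exists_pair_of_one_lt_card h2
    obtain ⟨w⟩ := hGconn u v
    cases w with
    | nil => exact absurd rfl huv
    | cons h _ => exact ⟨_, (SimpleGraph.mem_edgeSet G).mpr h⟩
  · rintro e he
    induction e with
    | _ u v =>
      rw [SimpleGraph.mem_edgeSet] at he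
      have huv : u ≠ v := he.ne
      obtain ⟨M, hM⟩ := hpm u v huv
      refine ⟨⟨Set.univ, fun a b =>
        (a = u ∧ b = v) ∨ (a = v ∧ b = u) ∨
          ∃ (ha : a ∈ ({u, v} : Set V)ᶜ) (hb : b ∈ ({u, v} : Set V)ᶜ),
            M.Adj ⟨a, ha⟩ ⟨b, hb⟩, ?_, ?_, ?_⟩, ⟨?_, fun _ => trivial⟩, ?_⟩
      · rintro a b (⟨rfl, rfl⟩ | ⟨rfl, rfl⟩ | ⟨ha, hb, hab⟩)
        · exact he
        · exact he.symm
        · exact M.adj_sub hab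
      · intro a b _; trivial
      · refine ⟨?_⟩; rintro a b (⟨rfl, rfl⟩ | ⟨rfl, rfl⟩ | ⟨ha, hb, hab⟩)
        · exact Or.inr (Or.inl ⟨rfl, rfl⟩)
        · exact Or.inl ⟨rfl, rfl⟩
        · exact Or.inr (Or.inr ⟨hb, ha, hab.symm⟩)
      · intro a _
        by_cases hau : a = u
        · subst hau
          refine ⟨v, Or.inl ⟨rfl, rfl⟩, ?_⟩
          rintro b (⟨-, rfl⟩ | ⟨rfl, rfl⟩ | ⟨ha, hb, hab⟩)
          · rfl
          · exact absurd rfl huv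
          · exact absurd (by simp : a ∈ ({a, v} : Set V)) ha
        by_cases hav : a = v
        · subst hav
          refine ⟨u, Or.inr (Or.inl ⟨rfl, rfl⟩), ?_⟩
          rintro b (⟨rfl, rfl⟩ | ⟨-, rfl⟩ | ⟨ha, hb, hab⟩)
          · exact absurd rfl huv
          · rfl
          · exact absurd (by simp : a ∈ ({u, a} : Set V)) ha
        · have ha : a ∈ ({u, v} : Set V)ᶜ := by simp [hau, hav]
          obtain ⟨b, hb, hbu⟩ := hM.1 (hM.2 ⟨a, ha⟩)
          refine ⟨b, Or.inr (Or.inr ⟨ha, b.2, hb⟩), ?_⟩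
          rintro c (⟨rfl, rfl⟩ | ⟨rfl, rfl⟩ | ⟨ha', hc, hac⟩)
          · exact absurd rfl hau
          · exact absurd rfl hav
          · exact congrArg Subtype.val (hbu ⟨c, hc⟩ hac)
      · exact Or.inl ⟨rfl, rfl⟩
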